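/- Assume positivity and let 𝒵 ⊆ σ(W) be a sub-σ-algebra. Then the following are equivalent: (a) σ(Y) and σ(W) are conditionally independent given σ(T) ∨ 𝒵 (i.e., 𝒵 is outcome distribution sufficient); (b) for every t ∈ 𝕋 and every y ∈ ℝ there exists a 𝒵-measurable function g : Ω → ℝ with F(y | t, W) = g almost surely. Moreover, the implication (b) ⇒ (a) holds without the positivity assumption. -/

import Mathlib

open MeasureTheory ProbabilityTheory

noncomputable section

/-- The real-valued indicator of the event `{T = t}`. -/
def indT {Ω 𝕋 : Type*} (T : Ω → 𝕋) (t : 𝕋) : Ω → ℝ :=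
  ({ω | T ω = t}).indicator fun _ => 1

/-- The propensity `π_t(𝒵) = E[1{T = t} | 𝒵]`. -/
def piZ {Ω 𝕋 : Type*} {mΩ : MeasurableSpace Ω} (P : Measure Ω) (T : Ω → 𝕋)
    (𝒵 : MeasurableSpace Ω) (t : 𝕋) : Ω → ℝ :=
  P[indT T t|𝒵]

/-- The outcome regression `b_t(𝒵) = E[Y·1{T = t} | 𝒵] / π_t(𝒵)`. -/
def bZ {Ω 𝕋 : Type*} {mΩ : MeasurableSpace Ω} (P : Measure Ω) (T : Ω → 𝕋) (Y : Ω → ℝ)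
    (𝒵 : MeasurableSpace Ω) (t : 𝕋) : Ω → ℝ :=
  fun ω => (P[fun ω' => Y ω' * indT T t ω'|𝒵]) ω / piZ P T 𝒵 t ω

/-- The adjusted mean `χ_t(𝒵) = E[b_t(𝒵)]`. -/
def chiZ {Ω 𝕋 : Type*} {mΩ : MeasurableSpace Ω} (P : Measure Ω) (T : Ω → 𝕋) (Y : Ω → ℝ)
    (𝒵 : MeasurableSpace Ω) (t : 𝕋) : ℝ :=
  ∫ ω, bZ P T Y 𝒵 t ω ∂P

/-- The influence function `ψ_t(𝒵) = b_t(𝒵) + (1{T=t}/π_t(𝒵))·(Y − b_t(𝒵)) − χ_t(𝒵)`. -/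
def psiZ {Ω 𝕋 : Type*} {mΩ : MeasurableSpace Ω} (P : Measure Ω) (T : Ω → 𝕋) (Y : Ω → ℝ)
    (𝒵 : MeasurableSpace Ω) (t : 𝕋) : Ω → ℝ :=
  fun ω => bZ P T Y 𝒵 t ω + indT T t ω / piZ P T 𝒵 t ω * (Y ω - bZ P T Y 𝒵 t ω)
    - chiZ P T Y 𝒵 t

/-- The efficiency bound `V_Δ(𝒵) = Var(Σ_t c_t·ψ_t(𝒵))`. -/
def VDelta {Ω 𝕋 : Type*} {mΩ : MeasurableSpace Ω} [Fintype 𝕋] (P : Measure Ω) (T : Ω → 𝕋)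
    (Y : Ω → ℝ) (c : 𝕋 → ℝ) (𝒵 : MeasurableSpace Ω) : ℝ :=
  variance (fun ω => ∑ t, c t * psiZ P T Y 𝒵 t ω) P

end

noncomputable section

/-- The real-valued indicator of the event `{Y ≤ y}`. -/
def indLE {Ω : Type*} (Y : Ω → ℝ) (y : ℝ) : Ω → ℝ :=
  ({ω | Y ω ≤ y}).indicator fun _ => 1

/-- The conditional distribution function `F(y | t, W)` derived from a regular conditional
distribution `κ` of `Y` given `(T, W)`. -/
def Fcdf {Ω 𝕎 𝕋 : Type*} [MeasurableSpace 𝕎] [MeasurableSpace 𝕋]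
    (κ : Kernel (𝕋 × 𝕎) ℝ) (W : Ω → 𝕎) (t : 𝕋) (y : ℝ) : Ω → ℝ :=
  fun ω => (κ (t, W ω) (Set.Iic y)).toReal

end


namespace ODSProof
open Filter

section Aux
variable {Ω 𝕋 : Type*} {m𝕋 : MeasurableSpace 𝕋}

/-- Sigma algebra of sets that agree with a `𝒵`-set on the fiber `{T = t}`. -/
def fiberMS (T : Ω → 𝕋) (𝒵 : MeasurableSpace Ω) (t : 𝕋) : MeasurableSpace Ω where
  MeasurableSet' S := ∃ Z : Set Ω, MeasurableSet[𝒵] Z ∧ ∀ ω, T ω = t → (ω ∈ S ↔ ω ∈ Z)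
  measurableSet_empty := ⟨∅, @MeasurableSet.empty _ 𝒵, fun _ _ => Iff.rfl⟩
  measurableSet_compl := fun S ⟨Z, hZ, hE⟩ =>
    ⟨Zᶜ, hZ.compl, fun ω hω => by simp only [Set.mem_compl_iff]; exact not_congr (hE ω hω)⟩
  measurableSet_iUnion := fun f hf => by
    choose Z hZ hE using hf
    exact ⟨⋃ n, Z n, MeasurableSet.iUnion hZ, fun ω hω => by
      simp only [Set.mem_iUnion]; exact exists_congr fun n => hE n ω hω⟩

lemma le_fiberMS (T : Ω → 𝕋) (𝒵 : MeasurableSpace Ω) (t : 𝕋) :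
    MeasurableSpace.comap T m𝕋 ⊔ 𝒵 ≤ fiberMS T 𝒵 t := by
  refine sup_le ?_ ?_
  · rintro S ⟨u, hu, rfl⟩
    by_cases ht : t ∈ u
    · exact ⟨Set.univ, MeasurableSet.univ, fun ω hω => by simp [Set.mem_preimage, hω, ht]⟩
    · exact ⟨∅, @MeasurableSet.empty _ 𝒵, fun ω hω => by simp [Set.mem_preimage, hω, ht]⟩
  · intro S hS; exact ⟨S, hS, fun _ _ => Iff.rfl⟩

lemma struct_simple (T : Ω → 𝕋) (𝒵 : MeasurableSpace Ω) (t : 𝕋)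
    (f : @SimpleFunc Ω (MeasurableSpace.comap T m𝕋 ⊔ 𝒵) ℝ) :
    ∃ g : Ω → ℝ, Measurable[𝒵] g ∧ ∀ ω, T ω = t → g ω = f ω := by
  induction f using SimpleFunc.induction with
  | const c hs =>
    rename_i s
    obtain ⟨Z, hZ, hE⟩ := le_fiberMS T 𝒵 t s hs
    refine ⟨Z.indicator fun _ => c, measurable_const.indicator hZ, fun ω hω => ?_⟩
    by_cases hmem : ω ∈ s
    · simp [Set.indicator_of_mem ((hE ω hω).mp hmem), hmem]
    · simp [Set.indicator_of_notMem (fun h => hmem ((hE ω hω).mpr h)), hmem]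
  | add hdisj h1 h2 =>
    obtain ⟨g1, hg1m, hg1⟩ := h1
    obtain ⟨g2, hg2m, hg2⟩ := h2
    exact ⟨g1 + g2, hg1m.add hg2m, fun ω hω => by
      simp [hg1 ω hω, hg2 ω hω]⟩

lemma struct_fun (T : Ω → 𝕋) (𝒵 : MeasurableSpace Ω) (t : 𝕋) {h : Ω → ℝ}
    (hh : StronglyMeasurable[MeasurableSpace.comap T m𝕋 ⊔ 𝒵] h)
    (h0 : ∀ ω, 0 ≤ h ω) (h1 : ∀ ω, h ω ≤ 1) :
    ∃ g : Ω → ℝ, Measurable[𝒵] g ∧ (∀ ω, 0 ≤ g ω) ∧ (∀ ω, g ω ≤ 1) ∧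
      ∀ ω, T ω = t → g ω = h ω := by
  choose g0 hg0m hg0e using fun n => struct_simple T 𝒵 t (hh.approx n)
  set c : ℕ → Ω → ℝ := fun n ω => max 0 (min (g0 n ω) 1) with hc
  have hcm : ∀ n, Measurable[𝒵] (c n) :=
    fun n => measurable_const.max ((hg0m n).min measurable_const)
  set L : Ω → ℝ := fun ω => limsup (fun n => c n ω) atTop with hL
  have hLm : Measurable[𝒵] L := Measurable.limsup hcm
  refine ⟨fun ω => max 0 (min (L ω) 1), measurable_const.max (hLm.min measurable_const),
    fun ω => le_max_left _ _, fun ω => max_le zero_le_one (min_le_right _ _), fun ω hω => ?_⟩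
  have hc_tendsto : Tendsto (fun n => c n ω) atTop (nhds (h ω)) := by
    have he : (fun n => c n ω) = fun n => max 0 (min ((hh.approx n) ω) 1) :=
      funext fun n => by rw [hc]; simp only; rw [hg0e n ω hω]
    rw [he]
    have h3 : Tendsto (fun n => max 0 (min ((hh.approx n) ω) 1)) atTop
        (nhds (max 0 (min (h ω) 1))) :=
      Tendsto.max tendsto_const_nhds (Tendsto.min (hh.tendsto_approx ω) tendsto_const_nhds)
    rwa [min_eq_left (h1 ω), max_eq_right (h0 ω)] at h3
  have hLe : L ω = h ω := hc_tendsto.limsup_eq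
  show max 0 (min (L ω) 1) = h ω
  rw [hLe, min_eq_left (h1 ω), max_eq_right (h0 ω)]

end Aux


section Main
variable {Ω 𝕎 𝕋 : Type*} [mΩ : MeasurableSpace Ω] [StandardBorelSpace Ω]
    [MeasurableSpace 𝕎] [MeasurableSpace 𝕋] [MeasurableSingletonClass 𝕋]
    [Fintype 𝕋] [Nonempty 𝕋]
    (P : Measure Ω) [IsProbabilityMeasure P]
    (T : Ω → 𝕋) (Y : Ω → ℝ) (W : Ω → 𝕎)

theorem bToA
    (hT : Measurable T) (hY : Measurable Y) (hW : Measurable W)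
    (κ : Kernel (𝕋 × 𝕎) ℝ) [IsMarkovKernel κ]
    (hκ : ∀ y : ℝ, (fun ω => (κ (T ω, W ω) (Set.Iic y)).toReal) =ᵐ[P]
      P[indLE Y y|MeasurableSpace.comap (fun ω => (T ω, W ω)) inferInstance])
    (𝒵 : MeasurableSpace Ω) (h𝒵W : 𝒵 ≤ MeasurableSpace.comap W inferInstance)
    (hm' : MeasurableSpace.comap T inferInstance ⊔ 𝒵 ≤ mΩ)
    (hb : ∀ (t : 𝕋) (y : ℝ), ∃ g : Ω → ℝ, Measurable[𝒵] g ∧ Fcdf κ W t y =ᵐ[P] g) :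
    CondIndep (MeasurableSpace.comap T inferInstance ⊔ 𝒵)
        (MeasurableSpace.comap Y inferInstance)
        (MeasurableSpace.comap W inferInstance) hm' P := by
  set mW := MeasurableSpace.comap W inferInstance with hmWdef
  set mT := MeasurableSpace.comap T inferInstance with hmTdef
  set mTW := MeasurableSpace.comap (fun ω => (T ω, W ω)) inferInstance with hmTWdef
  set m' := mT ⊔ 𝒵 with hm'def
  letI : MeasurableSpace Ω := mΩ
  have hT_le : mT ≤ mΩ := hT.comap_le
  have hW_le : mW ≤ mΩ := hW.comap_le
  have hTW_le : mTW ≤ mΩ := (hT.prodMk hW).comap_le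
  have hTW_eq : mTW = mT ⊔ mW := by
    rw [hmTWdef, show (inferInstance : MeasurableSpace (𝕋 × 𝕎)) =
      MeasurableSpace.comap Prod.fst inferInstance ⊔ MeasurableSpace.comap Prod.snd inferInstance
      from rfl, MeasurableSpace.comap_sup, MeasurableSpace.comap_comp,
      MeasurableSpace.comap_comp]
    rfl
  have hm'TW : m' ≤ mTW := by
    rw [hTW_eq]; exact sup_le_sup le_rfl h𝒵W
  choose g hg𝒵 hgae using hb
  -- the m'-measurable version of the conditional cdf given (T, W)
  set f : ℝ → Ω → ℝ := fun y ω => ∑ t, indT T t ω * g t y ω with hfdef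
  have hindT_meas : ∀ t, Measurable[mT] (indT T t) := by
    intro t
    exact measurable_const.indicator ⟨{t}, measurableSet_singleton t, rfl⟩
  have hf_meas : ∀ y, Measurable[m'] (f y) := by
    intro y
    refine Finset.measurable_sum _ fun t _ => Measurable.mul ?_ ?_
    · exact (hindT_meas t).mono le_sup_left le_rfl
    · exact (hg𝒵 t y).mono le_sup_right le_rfl
  have hsum : ∀ y ω, ∑ t, indT T t ω * Fcdf κ W t y ω = (κ (T ω, W ω) (Set.Iic y)).toReal := by
    intro y ω
    rw [Finset.sum_eq_single (T ω)]
    · rw [show indT T (T ω) ω = 1 from Set.indicator_of_mem (by exact rfl) _, one_mul]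
      rfl
    · intro b _ hb'
      rw [show indT T b ω = 0 from Set.indicator_of_notMem (fun h => hb' h.symm) _, zero_mul]
    · exact fun h => absurd (Finset.mem_univ _) h
  have hEq1 : ∀ y, P[indLE Y y|mTW] =ᵐ[P] f y := by
    intro y
    have h1 : P[indLE Y y|mTW] =ᵐ[P] fun ω => ∑ t, indT T t ω * Fcdf κ W t y ω :=
      (hκ y).symm.trans (Filter.EventuallyEq.of_eq (funext fun ω => (hsum y ω).symm))
    have h2 : ∀ᵐ ω ∂P, ∀ t, Fcdf κ W t y ω = g t y ω := ae_all_iff.mpr fun t => hgae t y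
    filter_upwards [h1, h2] with ω h1ω h2ω
    rw [h1ω]
    exact Finset.sum_congr rfl fun t _ => by rw [h2ω t]
  have hInt_f : ∀ y, Integrable (f y) P := fun y => integrable_condExp.congr (hEq1 y)
  have hEq2 : ∀ y, P[indLE Y y|m'] =ᵐ[P] f y := by
    intro y
    refine ((condExp_condExp_of_le hm'TW hTW_le).symm.trans ?_)
    refine (condExp_congr_ae (hEq1 y)).trans ?_
    rw [condExp_of_stronglyMeasurable hm' ((hf_meas y).stronglyMeasurable) (hInt_f y)]
  have hindLE : ∀ y : ℝ, indLE Y y = (Y ⁻¹' Set.Iic y).indicator (fun _ => (1:ℝ)) :=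
    fun y => rfl
  -- π-systems
  set p1 : Set (Set Ω) := Set.range (fun y : ℝ => Y ⁻¹' Set.Iic y) with hp1def
  set p2 : Set (Set Ω) := {s | MeasurableSet[mW] s} with hp2def
  have hgen1 : MeasurableSpace.comap Y inferInstance = MeasurableSpace.generateFrom p1 := by
    conv_lhs => rw [show (inferInstance : MeasurableSpace ℝ) = borel ℝ from rfl,
      borel_eq_generateFrom_Iic ℝ, MeasurableSpace.comap_generateFrom]
    congr 1
    rw [← Set.range_comp]
    rfl
  have hgen2 : mW = MeasurableSpace.generateFrom p2 :=
    (@MeasurableSpace.generateFrom_measurableSet Ω mW).symm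
  have hpi1 : IsPiSystem p1 := by
    rintro _ ⟨y1, rfl⟩ _ ⟨y2, rfl⟩ _
    exact ⟨min y1 y2, by rw [← Set.preimage_inter, Set.Iic_inter_Iic]⟩
  have hpi2 : IsPiSystem p2 := fun s hs u hu _ => @MeasurableSet.inter Ω mW _ _ hs hu
  refine CondIndepSets.condIndep hY.comap_le hW_le hpi1 hpi2 hgen1 hgen2 ?_
  rw [condIndepSets_iff _ _ _ _ ?_ ?_]
  rotate_left
  · rintro _ ⟨y, rfl⟩; exact hY measurableSet_Iic
  · exact fun s hs => hW_le s hs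
  rintro _ t2 ⟨y, rfl⟩ ht2
  set A := Y ⁻¹' Set.Iic y with hAdef
  have hA : MeasurableSet[mΩ] A := hY measurableSet_Iic
  have ht2Ω : MeasurableSet[mΩ] t2 := hW_le t2 ht2
  set oneA : Ω → ℝ := A.indicator (fun _ => 1) with honeA
  set oneb : Ω → ℝ := t2.indicator (fun _ => 1) with honeb
  have hone_eq : Set.indicator (A ∩ t2) (fun _ => (1:ℝ)) = oneb * oneA := by
    funext ω
    by_cases h1 : ω ∈ A <;> by_cases h2 : ω ∈ t2 <;>
      simp [honeA, honeb, Set.indicator_apply, h1, h2, Set.mem_inter_iff]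
  have hIntA : Integrable oneA P := (integrable_const (1:ℝ)).indicator hA
  have hIntb : Integrable oneb P := (integrable_const (1:ℝ)).indicator ht2Ω
  have hIntba : Integrable (oneb * oneA) P := by
    rw [← hone_eq]; exact (integrable_const 1).indicator (hA.inter ht2Ω)
  have honeb_SM : StronglyMeasurable[mTW] oneb := by
    refine Measurable.stronglyMeasurable (measurable_const.indicator ?_)
    rw [hTW_eq]
    exact (le_sup_right : mW ≤ mT ⊔ mW) t2 ht2
  have step1 : P[oneb * oneA|mTW] =ᵐ[P] oneb * P[oneA|mTW] :=
    condExp_mul_of_stronglyMeasurable_left honeb_SM hIntba hIntA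
  have hoA : P[oneA|mTW] =ᵐ[P] f y := hEq1 y
  have stepA : P[Set.indicator (A ∩ t2) (fun _ => (1:ℝ))|mTW] =ᵐ[P] f y * oneb := by
    rw [hone_eq]
    refine step1.trans ?_
    filter_upwards [hoA] with ω hω
    simp only [Pi.mul_apply, hω, mul_comm]
  have hfy_SM : StronglyMeasurable[m'] (f y) := (hf_meas y).stronglyMeasurable
  have hInt_fb : Integrable (f y * oneb) P := by
    refine Integrable.mono (hInt_f y) ((hfy_SM.mono hm').aestronglyMeasurable.mul
      hIntb.aestronglyMeasurable) (ae_of_all _ fun ω => ?_)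
    simp only [Pi.mul_apply, norm_mul]
    rcases Set.indicator_eq_zero_or_self t2 (fun _ => (1:ℝ)) ω with h | h
    · rw [honeb]; rw [h]; simp
    · rw [honeb]; rw [h]; simp
  have main : P⟦A ∩ t2|m'⟧ =ᵐ[P] P[oneA|m'] * P[oneb|m'] := by
    refine ((condExp_condExp_of_le hm'TW hTW_le).symm.trans
      ((condExp_congr_ae stepA).trans ?_))
    refine (condExp_mul_of_stronglyMeasurable_left hfy_SM hInt_fb hIntb).trans ?_
    filter_upwards [hEq2 y] with ω hω
    have hω' : (P[oneA|m']) ω = f y ω := hω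
    simp only [Pi.mul_apply, hω']
  exact main

theorem aToB
    (hT : Measurable T) (hY : Measurable Y) (hW : Measurable W)
    (κ : Kernel (𝕋 × 𝕎) ℝ) [IsMarkovKernel κ]
    (hκ : ∀ y : ℝ, (fun ω => (κ (T ω, W ω) (Set.Iic y)).toReal) =ᵐ[P]
      P[indLE Y y|MeasurableSpace.comap (fun ω => (T ω, W ω)) inferInstance])
    (𝒵 : MeasurableSpace Ω) (h𝒵W : 𝒵 ≤ MeasurableSpace.comap W inferInstance)
    (hm' : MeasurableSpace.comap T inferInstance ⊔ 𝒵 ≤ mΩ)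
    (hpos : ∀ t, ∀ᵐ ω ∂P,
        0 < piZ P T (MeasurableSpace.comap W inferInstance) t ω ∧
          piZ P T (MeasurableSpace.comap W inferInstance) t ω < 1)
    (hCI : CondIndep (MeasurableSpace.comap T inferInstance ⊔ 𝒵)
          (MeasurableSpace.comap Y inferInstance)
          (MeasurableSpace.comap W inferInstance) hm' P) :
    ∀ (t : 𝕋) (y : ℝ), ∃ g : Ω → ℝ, Measurable[𝒵] g ∧ Fcdf κ W t y =ᵐ[P] g := by
  set mW := MeasurableSpace.comap W inferInstance with hmWdef
  set mT := MeasurableSpace.comap T inferInstance with hmTdef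
  set mTW := MeasurableSpace.comap (fun ω => (T ω, W ω)) inferInstance with hmTWdef
  set m' := mT ⊔ 𝒵 with hm'def
  letI : MeasurableSpace Ω := mΩ
  have hT_le : mT ≤ mΩ := hT.comap_le
  have hW_le : mW ≤ mΩ := hW.comap_le
  have hTW_le : mTW ≤ mΩ := (hT.prodMk hW).comap_le
  have h𝒵_le : 𝒵 ≤ mΩ := h𝒵W.trans hW_le
  have hTW_eq : mTW = mT ⊔ mW := by
    rw [hmTWdef, show (inferInstance : MeasurableSpace (𝕋 × 𝕎)) =
      MeasurableSpace.comap Prod.fst inferInstance ⊔ MeasurableSpace.comap Prod.snd inferInstance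
      from rfl, MeasurableSpace.comap_sup, MeasurableSpace.comap_comp,
      MeasurableSpace.comap_comp]
    rfl
  have hm'TW : m' ≤ mTW := by rw [hTW_eq]; exact sup_le_sup le_rfl h𝒵W
  have hprod := (condIndep_iff m' (MeasurableSpace.comap Y inferInstance) mW hm'
    hY.comap_le hW_le P).mp hCI
  intro t y
  -- basic objects
  set A := Y ⁻¹' Set.Iic y with hAdef
  have hAY : MeasurableSet[MeasurableSpace.comap Y inferInstance] A :=
    ⟨Set.Iic y, measurableSet_Iic, rfl⟩
  have hAΩ : MeasurableSet[mΩ] A := hY measurableSet_Iic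
  set oneA : Ω → ℝ := A.indicator (fun _ => 1) with honeA
  have hIntA : Integrable oneA P := (integrable_const (1:ℝ)).indicator hAΩ
  set h : Ω → ℝ := P[oneA|m'] with hhdef
  have h01 : ∀ᵐ ω ∂P, 0 ≤ h ω ∧ h ω ≤ 1 := by
    have h0 : 0 ≤ᵐ[P] h :=
      condExp_nonneg (ae_of_all _ fun ω => Set.indicator_nonneg (fun _ _ => zero_le_one) ω)
    have h1 : h ≤ᵐ[P] P[(fun _ => (1:ℝ))|m'] :=
      condExp_mono hIntA (integrable_const 1) (ae_of_all _ fun ω => by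
        by_cases hω : ω ∈ A <;> simp [honeA, Set.indicator_apply, hω])
    rw [condExp_const hm'] at h1
    filter_upwards [h0, h1] with ω hω0 hω1
    exact ⟨hω0, hω1⟩
  set h' : Ω → ℝ := fun ω => max 0 (min (h ω) 1) with hh'def
  have h'_ae : h' =ᵐ[P] h := by
    filter_upwards [h01] with ω ⟨hω0, hω1⟩
    rw [hh'def]; simp only
    rw [min_eq_left hω1, max_eq_right hω0]
  have h'_SM : StronglyMeasurable[m'] h' :=
    (measurable_const.max ((stronglyMeasurable_condExp.measurable).min
      measurable_const)).stronglyMeasurable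
  have h'Int : Integrable h' P := integrable_condExp.congr h'_ae.symm
  have h'0 : ∀ ω, 0 ≤ h' ω := fun ω => le_max_left _ _
  have h'1 : ∀ ω, h' ω ≤ 1 := fun ω => max_le zero_le_one (min_le_right _ _)
  -- the π-system generating mTW
  set pi : Set (Set Ω) :=
    {S | ∃ a b, MeasurableSet[mT] a ∧ MeasurableSet[mW] b ∧ S = a ∩ b} with hpidef
  have h_eq : mTW = MeasurableSpace.generateFrom pi := by
    rw [hTW_eq]
    refine le_antisymm (sup_le ?_ ?_) (MeasurableSpace.generateFrom_le ?_)
    · intro s hs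
      exact MeasurableSpace.measurableSet_generateFrom
        ⟨s, Set.univ, hs, @MeasurableSet.univ Ω mW, (Set.inter_univ s).symm⟩
    · intro s hs
      exact MeasurableSpace.measurableSet_generateFrom
        ⟨Set.univ, s, @MeasurableSet.univ Ω mT, hs, (Set.univ_inter s).symm⟩
    · rintro S ⟨a, b, ha, hb, rfl⟩
      exact @MeasurableSet.inter Ω (mT ⊔ mW) _ _ ((le_sup_left : mT ≤ mT ⊔ mW) a ha)
        ((le_sup_right : mW ≤ mT ⊔ mW) b hb)
  have hpi : IsPiSystem pi := by
    rintro S1 ⟨a1, b1, ha1, hb1, rfl⟩ S2 ⟨a2, b2, ha2, hb2, rfl⟩ _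
    exact ⟨a1 ∩ a2, b1 ∩ b2, @MeasurableSet.inter Ω mT _ _ ha1 ha2,
      @MeasurableSet.inter Ω mW _ _ hb1 hb2, by rw [Set.inter_inter_inter_comm]⟩
  -- total integral equality
  have htotal : ∫ ω, h' ω ∂P = ∫ ω, oneA ω ∂P := by
    rw [integral_congr_ae h'_ae, hhdef, integral_condExp hm']
  -- set integral equality for all mTW-measurable sets
  have claim : ∀ C, MeasurableSet[mTW] C → ∫ ω in C, h' ω ∂P = ∫ ω in C, oneA ω ∂P := by
    intro D hD
    refine MeasurableSpace.induction_on_inter (m := mTW)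
      (C := fun S _ => ∫ ω in S, h' ω ∂P = ∫ ω in S, oneA ω ∂P) h_eq hpi ?_ ?_ ?_ ?_ D hD
    · simp
    · rintro S ⟨a, b, ha, hb, rfl⟩
      have haΩ : MeasurableSet[mΩ] a := hT_le a ha
      have hbΩ : MeasurableSet[mΩ] b := hW_le b hb
      have ha' : MeasurableSet[m'] a := (le_sup_left : mT ≤ m') a ha
      set oneb : Ω → ℝ := b.indicator (fun _ => 1) with honeb
      have hIntb : Integrable oneb P := (integrable_const (1:ℝ)).indicator hbΩ
      have hIndb : ∀ (v : Ω → ℝ), b.indicator v = fun ω => v ω * oneb ω := by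
        intro v; funext ω
        by_cases hω : ω ∈ b <;> simp [honeb, Set.indicator_apply, hω]
      have hInt_hb : Integrable (fun ω => h ω * oneb ω) P := by
        rw [← hIndb]; exact integrable_condExp.indicator hbΩ
      have hInt_hb' : Integrable (h * oneb) P := hInt_hb
      have e2 : P[h * oneb|m'] =ᵐ[P] P[(A ∩ b).indicator (fun _ => (1:ℝ))|m'] :=
        (condExp_mul_of_stronglyMeasurable_left stronglyMeasurable_condExp hInt_hb' hIntb).trans
          (hprod A b hAY hb).symm
      have hacbA : a ∩ (A ∩ b) = (a ∩ b) ∩ A := by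
        ext ω; simp only [Set.mem_inter_iff]; tauto
      calc ∫ ω in a ∩ b, h' ω ∂P
          = ∫ ω in a ∩ b, h ω ∂P :=
            setIntegral_congr_ae (haΩ.inter hbΩ) (h'_ae.mono fun ω hω _ => hω)
        _ = ∫ ω in a, b.indicator h ω ∂P := (setIntegral_indicator hbΩ).symm
        _ = ∫ ω in a, (h * oneb) ω ∂P := by rw [hIndb h]; rfl
        _ = ∫ ω in a, (P[h * oneb|m']) ω ∂P :=
            (setIntegral_condExp hm' hInt_hb' ha').symm
        _ = ∫ ω in a, (P[(A ∩ b).indicator (fun _ => (1:ℝ))|m']) ω ∂P :=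
            setIntegral_congr_ae haΩ (e2.mono fun ω hω _ => hω)
        _ = ∫ ω in a, ((A ∩ b).indicator (fun _ => (1:ℝ))) ω ∂P :=
            setIntegral_condExp hm' ((integrable_const (1:ℝ)).indicator (hAΩ.inter hbΩ)) ha'
        _ = ∫ _ω in a ∩ (A ∩ b), (1:ℝ) ∂P := setIntegral_indicator (hAΩ.inter hbΩ)
        _ = ∫ _ω in (a ∩ b) ∩ A, (1:ℝ) ∂P := by rw [hacbA]
        _ = ∫ ω in a ∩ b, A.indicator (fun _ => (1:ℝ)) ω ∂P := (setIntegral_indicator hAΩ).symm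
        _ = ∫ ω in a ∩ b, oneA ω ∂P := rfl
    · intro S hS hSeq
      have hSΩ : MeasurableSet[mΩ] S := hTW_le S hS
      have l1 := integral_add_compl hSΩ h'Int
      have l2 := integral_add_compl hSΩ hIntA
      rw [← htotal] at l2
      linarith [l1, l2, hSeq]
    · intro f' hdisj hf' hfeq
      rw [integral_iUnion (fun i => hTW_le _ (hf' i)) hdisj h'Int.integrableOn,
        integral_iUnion (fun i => hTW_le _ (hf' i)) hdisj hIntA.integrableOn]
      exact tsum_congr hfeq
  -- conclude that h' is an mTW-conditional expectation of oneA
  have hcond : h' =ᵐ[P] P[oneA|mTW] :=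
    ae_eq_condExp_of_forall_setIntegral_eq hTW_le hIntA
      (fun s _ _ => h'Int.integrableOn) (fun s hs _ => claim s hs)
      ⟨h', h'_SM.mono hm'TW, EventuallyEq.rfl⟩
  have hsum : ∀ ω, ∑ t', indT T t' ω * Fcdf κ W t' y ω
      = (κ (T ω, W ω) (Set.Iic y)).toReal := by
    intro ω
    rw [Finset.sum_eq_single (T ω)]
    · rw [show indT T (T ω) ω = 1 from Set.indicator_of_mem (by exact rfl) _, one_mul]
      rfl
    · intro b _ hb'
      rw [show indT T b ω = 0 from Set.indicator_of_notMem (fun hh => hb' hh.symm) _, zero_mul]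
    · exact fun hnm => absurd (Finset.mem_univ _) hnm
  have hsum_ae : (fun ω => ∑ t', indT T t' ω * Fcdf κ W t' y ω) =ᵐ[P] h' := by
    have e0 : (fun ω => ∑ t', indT T t' ω * Fcdf κ W t' y ω)
        = fun ω => (κ (T ω, W ω) (Set.Iic y)).toReal := funext fun ω => hsum ω
    rw [e0]
    exact (hκ y).trans hcond.symm
  -- extract a 𝒵-measurable version on the fiber {T = t}
  obtain ⟨g, hg𝒵, hg0, hg1, hgfib⟩ := struct_fun T 𝒵 t h'_SM h'0 h'1
  have hWmW : @Measurable Ω 𝕎 mW _ W := fun s hs => ⟨s, hs, rfl⟩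
  have hF_mW : Measurable[mW] (Fcdf κ W t y) := by
    have k1 : Measurable fun w : 𝕎 => (κ (t, w) (Set.Iic y)).toReal :=
      ((κ.measurable_coe measurableSet_Iic).comp measurable_prodMk_left).ennreal_toReal
    exact fun s hs => ⟨_, k1 hs, rfl⟩
  have hF0 : ∀ ω, 0 ≤ Fcdf κ W t y ω := fun ω => ENNReal.toReal_nonneg
  set u : Ω → ℝ := fun ω => |Fcdf κ W t y ω - g ω| with hudef
  have hg_mW : Measurable[mW] g := fun s hs => h𝒵W _ (hg𝒵 hs)
  have hu_mW : Measurable[mW] u := by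
    letI : MeasurableSpace Ω := mW
    exact (hF_mW.sub hg_mW).abs
  have hindT_int : Integrable (indT T t) P :=
    (integrable_const (1:ℝ)).indicator (hT (measurableSet_singleton t))
  have hu0 : (fun ω => u ω * indT T t ω) =ᵐ[P] 0 := by
    filter_upwards [hsum_ae] with ω hω
    by_cases hTt : T ω = t
    · have hcol : ∑ t', indT T t' ω * Fcdf κ W t' y ω = Fcdf κ W t y ω := by
        rw [Finset.sum_eq_single t]
        · rw [show indT T t ω = 1 from
            Set.indicator_of_mem (show ω ∈ {ω' | T ω' = t} from hTt) _, one_mul]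
        · intro b _ hb'
          rw [show indT T b ω = 0 from
            Set.indicator_of_notMem (fun hh => hb' (hh.symm.trans hTt)) _, zero_mul]
        · exact fun hnm => absurd (Finset.mem_univ _) hnm
      rw [hcol] at hω
      have hFg : Fcdf κ W t y ω = g ω := by rw [hω, hgfib ω hTt]
      simp [hudef, hFg, sub_self]
    · have hz : indT T t ω = 0 :=
        Set.indicator_of_notMem (show ω ∉ {ω' | T ω' = t} from hTt) _
      simp [hz]
  have hIntu0 : Integrable (u * indT T t) P :=
    (integrable_zero _ _ _).congr hu0.symm
  have hpull : P[u * indT T t|mW] =ᵐ[P] u * P[indT T t|mW] :=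
    condExp_mul_of_stronglyMeasurable_left hu_mW.stronglyMeasurable hIntu0 hindT_int
  have hzero : u * P[indT T t|mW] =ᵐ[P] 0 :=
    hpull.symm.trans ((condExp_congr_ae hu0).trans (by rw [condExp_zero]))
  refine ⟨g, hg𝒵, ?_⟩
  filter_upwards [hzero, hpos t] with ω hω hposω
  have hmul : u ω * piZ P T mW t ω = 0 := hω
  have hu : u ω = 0 := by
    rcases mul_eq_zero.mp hmul with hcase | hcase
    · exact hcase
    · exact absurd hcase (ne_of_gt hposω.1)
  have hsub : Fcdf κ W t y ω - g ω = 0 := abs_eq_zero.mp hu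
  linarith [hsub]

end Main
end ODSProof

/-- **Characterization of outcome distribution sufficiency.** Under positivity,
`σ(Y) ⫫ σ(W) | σ(T) ⊔ 𝒵` holds if and only if for every `t` and `y` the conditional
distribution function `F(y | t, W)` is a.s. equal to a `𝒵`-measurable function; the
implication from right to left holds without positivity. -/
theorem outcome_distribution_sufficiency_characterization
    {Ω 𝕎 𝕋 : Type*} [mΩ : MeasurableSpace Ω] [StandardBorelSpace Ω]
    [MeasurableSpace 𝕎] [MeasurableSpace 𝕋] [MeasurableSingletonClass 𝕋]
    [Fintype 𝕋] [Nonempty 𝕋]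
    (P : Measure Ω) [IsProbabilityMeasure P]
    (T : Ω → 𝕋) (Y : Ω → ℝ) (W : Ω → 𝕎)
    (hT : Measurable T) (hY : Measurable Y) (hW : Measurable W)
    (κ : Kernel (𝕋 × 𝕎) ℝ) [IsMarkovKernel κ]
    (hκ : ∀ y : ℝ, (fun ω => (κ (T ω, W ω) (Set.Iic y)).toReal) =ᵐ[P]
      P[indLE Y y|MeasurableSpace.comap (fun ω => (T ω, W ω)) inferInstance])
    (𝒵 : MeasurableSpace Ω) (h𝒵W : 𝒵 ≤ MeasurableSpace.comap W inferInstance)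
    (hm' : MeasurableSpace.comap T inferInstance ⊔ 𝒵 ≤ mΩ) :
    ((∀ t, ∀ᵐ ω ∂P,
        0 < piZ P T (MeasurableSpace.comap W inferInstance) t ω ∧
          piZ P T (MeasurableSpace.comap W inferInstance) t ω < 1) →
      (CondIndep (MeasurableSpace.comap T inferInstance ⊔ 𝒵)
          (MeasurableSpace.comap Y inferInstance)
          (MeasurableSpace.comap W inferInstance) hm' P ↔
        ∀ (t : 𝕋) (y : ℝ), ∃ g : Ω → ℝ, Measurable[𝒵] g ∧ Fcdf κ W t y =ᵐ[P] g)) ∧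
    ((∀ (t : 𝕋) (y : ℝ), ∃ g : Ω → ℝ, Measurable[𝒵] g ∧ Fcdf κ W t y =ᵐ[P] g) →
      CondIndep (MeasurableSpace.comap T inferInstance ⊔ 𝒵)
        (MeasurableSpace.comap Y inferInstance)
        (MeasurableSpace.comap W inferInstance) hm' P) := by
  have hbToA := ODSProof.bToA (mΩ := mΩ) P T Y W hT hY hW κ hκ 𝒵 h𝒵W hm'
  exact ⟨fun hpos => ⟨fun hCI => ODSProof.aToB (mΩ := mΩ) P T Y W hT hY hW κ hκ 𝒵 h𝒵W hm' hpos hCI,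
    hbToA⟩, hbToA⟩
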